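/- Let B be symmetric positive definite, X ∈ ℝ^{n×p} with XᵀBX = I, and G ∈ ℝ^{n×p} with XᵀG symmetric. Then tr(ZᵀG) = 0 for all Z with ZᵀBX + XᵀBZ = 0 if and only if (I − BXXᵀ)G = 0. -/

import Mathlib

open Matrix

theorem variational_iff_projected (n p : ℕ)
    (B : Matrix (Fin n) (Fin n) ℝ) (hB : B.PosDef)
    (X : Matrix (Fin n) (Fin p) ℝ) (hX : Xᵀ * B * X = 1)
    (G : Matrix (Fin n) (Fin p) ℝ) (hsym : Xᵀ * G = Gᵀ * X) :
    (∀ Z : Matrix (Fin n) (Fin p) ℝ, Zᵀ * B * X + Xᵀ * B * Z = 0 → (Zᵀ * G).trace = 0)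
    ↔ (1 - B * X * Xᵀ) * G = 0 := by
  have hBt : Bᵀ = B := hB.1
  have hdet : IsUnit B.det := isUnit_iff_ne_zero.mpr hB.det_pos.ne'
  have hBiB : B⁻¹ * B = 1 := nonsing_inv_mul B hdet
  have hBBi : B * B⁻¹ = 1 := mul_nonsing_inv B hdet
  have hBit : B⁻¹ᵀ = B⁻¹ := by rw [transpose_nonsing_inv, hBt]
  constructor
  · intro h
    set W := (1 - B * X * Xᵀ) * G with hW
    have hWdef : W = G - B * X * Xᵀ * G := by
      rw [hW, Matrix.sub_mul, Matrix.one_mul]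
    -- XᵀW = 0
    have hXW : Xᵀ * W = 0 := by
      rw [hWdef, Matrix.mul_sub]
      simp only [← Matrix.mul_assoc]
      rw [hX, Matrix.one_mul, sub_self]
    have hWX : Wᵀ * X = 0 := by
      have := congrArg transpose hXW
      simpa [Matrix.transpose_mul] using this
    -- use Z = B⁻¹ * W
    have hZ : (B⁻¹ * W)ᵀ * B * X + Xᵀ * B * (B⁻¹ * W) = 0 := by
      rw [Matrix.transpose_mul, hBit, Matrix.mul_assoc Wᵀ B⁻¹ B, hBiB,
        Matrix.mul_one, hWX, ← Matrix.mul_assoc (Xᵀ * B) B⁻¹ W,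
        Matrix.mul_assoc Xᵀ B B⁻¹, hBBi, Matrix.mul_one, hXW, add_zero]
    have htr := h (B⁻¹ * W) hZ
    have hGW : G = W + B * X * Xᵀ * G := by rw [hWdef]; abel
    rw [Matrix.transpose_mul, hBit] at htr
    rw [Matrix.mul_assoc (Wᵀ) B⁻¹ G] at htr
    conv at htr => lhs; rw [hGW]
    rw [Matrix.mul_add, Matrix.mul_add, trace_add] at htr
    have e2 : Wᵀ * (B⁻¹ * (B * X * Xᵀ * G)) = Wᵀ * X * Xᵀ * G := by
      simp only [← Matrix.mul_assoc]
      rw [Matrix.mul_assoc Wᵀ B⁻¹ B, hBiB, Matrix.mul_one]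
    rw [e2, hWX, Matrix.zero_mul, Matrix.zero_mul, trace_zero, add_zero] at htr
    have htr2 : (Wᵀ * (B⁻¹ * W)).trace = 0 := htr
    -- deduce W = 0 from tr(Wᵀ B⁻¹ W) = 0 and B⁻¹ posdef
    have hBi : (B⁻¹).PosDef := hB.inv
    have hdiag : ∀ j, (Wᵀ * (B⁻¹ * W)) j j
        = (fun i => W i j) ⬝ᵥ (B⁻¹ *ᵥ fun i => W i j) := by
      intro j
      simp [Matrix.mul_apply, dotProduct, Matrix.mulVec, Finset.mul_sum]
    have hnonneg : ∀ j, 0 ≤ (Wᵀ * (B⁻¹ * W)) j j := by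
      intro j
      rw [hdiag j]
      simpa using hBi.posSemidef.dotProduct_mulVec_nonneg (fun i => W i j)
    have hzero : ∀ j, (Wᵀ * (B⁻¹ * W)) j j = 0 := by
      intro j
      have hsum := Finset.sum_eq_zero_iff_of_nonneg
        (fun i (_ : i ∈ Finset.univ) => hnonneg i) |>.mp htr2
      exact hsum j (Finset.mem_univ j)
    have hcol : ∀ j, (fun i => W i j) = 0 := by
      intro j
      by_contra hc
      have hpos := hBi.dotProduct_mulVec_pos (x := fun i => W i j) hc
      rw [show star (fun i => W i j) = (fun i => W i j) by simp] at hpos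
      have hz := hzero j
      rw [hdiag j] at hz
      exact absurd hz (ne_of_gt hpos)
    ext i j
    exact congrFun (hcol j) i
  · intro hG Z hZ
    have hGeq : G = B * X * Xᵀ * G := by
      rw [Matrix.sub_mul, Matrix.one_mul] at hG
      exact sub_eq_zero.mp hG
    have hKt : (Zᵀ * B * X)ᵀ = Xᵀ * B * Z := by
      rw [Matrix.transpose_mul, Matrix.transpose_mul, Matrix.transpose_transpose,
        hBt, ← Matrix.mul_assoc]
    have hKskew : (Zᵀ * B * X)ᵀ = -(Zᵀ * B * X) := by
      rw [hKt]
      rw [add_comm] at hZ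
      exact eq_neg_of_add_eq_zero_left hZ
    have hSsym : (Xᵀ * G)ᵀ = Xᵀ * G := by
      rw [Matrix.transpose_mul, Matrix.transpose_transpose, ← hsym]
    have hform : Zᵀ * G = (Zᵀ * B * X) * (Xᵀ * G) := by
      conv_lhs => rw [hGeq]
      simp only [← Matrix.mul_assoc]
    have hneg : ((Zᵀ * B * X) * (Xᵀ * G)).trace
        = -((Zᵀ * B * X) * (Xᵀ * G)).trace := by
      conv_lhs => rw [← trace_transpose, Matrix.transpose_mul, hSsym, hKskew,
        Matrix.mul_neg, trace_neg, trace_mul_comm]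
    rw [hform]
    linarith
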